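/- arXiv:2008.13163 — 2 statements merged into one kernel-verified Lean document; each statement's English description precedes it below -/
import Mathlib

section
/- For positive integers k, l with k ≥ 2 and l ≥ 2, ((-1)^l - (-1)^k) S(1,k+l) = ∑_{j=1}^{l} (-1)^{j-1} T(l+1-j) T(k+j) + ∑_{j=1}^{k} (-1)^{j} T(k+1-j) T(l+j), where T(1) := 2 log 2, T(s) := 2∑_{m≥1} 1/(2m-1)^s for s ≥ 2, and S(1,m) := 4∑_{0<a<b, a even, b odd} 1/(a · b^m) = 4∑_{0<i<j} 1/((2i)(2j-1)^m). -/
/-- Depth-one multiple T-value with the convention `T(1) = 2 log 2`. -/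
noncomputable def Tval (s : ℕ) : ℝ :=
  if s = 1 then 2 * Real.log 2 else 2 * ∑' m : ℕ, (1 : ℝ) / (2 * (m : ℝ) + 1) ^ s

/-- Depth-two multiple S-value `S(1,m) = 4 ∑_{0<i<j} 1/((2i)(2j-1)^m)`. -/
noncomputable def S1 (m : ℕ) : ℝ :=
  4 * ∑' (i : ℕ) (j : ℕ),
    (1 : ℝ) / ((2 * ((i : ℝ) + 1)) * (2 * ((i : ℝ) + (j : ℝ) + 2) - 1) ^ m)

open Filter Finset Real Topology

noncomputable def od (n : ℕ) : ℝ := 2 * (n : ℝ) + 1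

lemma od_pos (n : ℕ) : 0 < od n := by unfold od; positivity
lemma one_le_od (n : ℕ) : 1 ≤ od n := by unfold od; have := Nat.cast_nonneg (α := ℝ) n; linarith
lemma add_one_le_od (n : ℕ) : (n : ℝ) + 1 ≤ od n := by
  unfold od; have := Nat.cast_nonneg (α := ℝ) n; linarith

lemma summable_sq : Summable (fun n : ℕ => 1 / ((n : ℝ) + 1) ^ 2) := by
  have h := summable_one_div_nat_pow.mpr (le_refl 2)
  have := (summable_nat_add_iff 1).mpr h
  refine this.congr fun n => ?_
  push_cast
  ring

lemma summable_od {s : ℕ} (hs : 2 ≤ s) : Summable fun n : ℕ => 1 / od n ^ s := by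
  refine Summable.of_nonneg_of_le (fun n => by have := od_pos n; positivity) (fun n => ?_) summable_sq
  have hop := od_pos n
  apply one_div_le_one_div_of_le (by positivity)
  calc ((n:ℝ)+1)^2 ≤ od n ^ 2 := by
        apply pow_le_pow_left₀ (by positivity) (add_one_le_od n)
    _ ≤ od n ^ s := pow_le_pow_right₀ (one_le_od n) hs


lemma Tval_eq {s : ℕ} (hs : 2 ≤ s) : Tval s = 2 * ∑' n : ℕ, 1 / od n ^ s := by
  rw [Tval, if_neg (by omega)]; rfl

lemma Tval_one : Tval 1 = 2 * Real.log 2 := by rw [Tval, if_pos rfl]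

lemma Tmul {a b : ℕ} (ha : 2 ≤ a) (hb : 2 ≤ b) :
    Tval a * Tval b = 4 * ∑' (m : ℕ) (n : ℕ), 1 / (od m ^ a * od n ^ b) := by
  rw [Tval_eq ha, Tval_eq hb]
  have h : (∑' m : ℕ, 1 / od m ^ a) * (∑' n : ℕ, 1 / od n ^ b)
      = ∑' (m : ℕ) (n : ℕ), 1 / (od m ^ a * od n ^ b) := by
    rw [← tsum_mul_right]
    refine tsum_congr fun m => ?_
    rw [← tsum_mul_left]
    exact tsum_congr fun n => by rw [div_mul_div_comm, one_mul]
  rw [show ∀ X Y : ℝ, (2*X)*(2*Y) = 4*(X*Y) from fun X Y => by ring, h]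

lemma summable_pair {a b : ℕ} (ha : 2 ≤ a) (hb : 2 ≤ b) :
    Summable (fun p : ℕ × ℕ => 1 / (od p.1 ^ a * od p.2 ^ b)) := by
  have h := (summable_od ha).mul_of_nonneg (summable_od hb)
    (fun n => by have := od_pos n; positivity) (fun n => by have := od_pos n; positivity)
  refine h.congr fun p => ?_
  rw [div_mul_div_comm, one_mul]

noncomputable def Hf (a b : ℕ) (p : ℕ × ℕ) : ℝ :=
  1 / (od p.1 ^ a * od p.2 ^ b * (od p.1 + od p.2))

noncomputable def Df (a : ℕ) (p : ℕ × ℕ) : ℝ :=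
  1 / (od p.1 ^ a * od p.2 * (od p.1 + od p.2))

lemma summable_Hf {a b : ℕ} (ha : 2 ≤ a) (hb : 2 ≤ b) : Summable (Hf a b) := by
  refine (summable_pair ha hb).of_nonneg_of_le
    (fun p => by have h1 := od_pos p.1; have h2 := od_pos p.2; unfold Hf; positivity)
    (fun p => ?_)
  unfold Hf
  have h1 := od_pos p.1; have h2 := od_pos p.2
  have h3 := one_le_od p.1
  apply one_div_le_one_div_of_le (by positivity)
  nlinarith [pow_pos h1 a, pow_pos h2 b, mul_pos (pow_pos h1 a) (pow_pos h2 b)]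

lemma summable_Df {a : ℕ} (ha : 2 ≤ a) : Summable (Df a) := by
  refine (summable_pair ha (le_refl 2)).of_nonneg_of_le
    (fun p => by have h1 := od_pos p.1; have h2 := od_pos p.2; unfold Df; positivity)
    (fun p => ?_)
  unfold Df
  have h1 := od_pos p.1; have h2 := od_pos p.2
  apply one_div_le_one_div_of_le (by positivity)
  nlinarith [pow_pos h1 a, mul_pos (pow_pos h1 a) h2]

lemma tsum_prod_eq {f : ℕ × ℕ → ℝ} (hf : Summable f) :
    ∑' p : ℕ × ℕ, f p = ∑' (m : ℕ) (n : ℕ), f (m, n) :=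
  Summable.tsum_prod' hf fun m => hf.prod_factor m

lemma Hswap (a b : ℕ) : ∑' p : ℕ × ℕ, Hf a b p = ∑' p : ℕ × ℕ, Hf b a p := by
  rw [← (Equiv.prodComm ℕ ℕ).tsum_eq (Hf a b)]
  refine tsum_congr fun p => ?_
  unfold Hf
  simp only [Equiv.prodComm_apply, Prod.fst_swap, Prod.snd_swap]
  ring_nf


lemma geom_aux (M N : ℝ) (hM : 0 < M) (hN : 0 < N) (k L : ℕ) :
    ∑ j ∈ Icc 1 (L + 1), (-1 : ℝ) ^ (j - 1) / (M ^ (k + j) * N ^ (L + 3 - j))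
      = 1 / (M ^ k * N ^ (L + 2) * (M + N))
        - (-1 : ℝ) ^ (L + 1) / (M ^ (k + L + 1) * N * (M + N)) := by
  have hM0 : M ≠ 0 := hM.ne'
  have hN0 : N ≠ 0 := hN.ne'
  have hMN : M + N ≠ 0 := by positivity
  have hx1 : (-N / M) ≠ 1 := by
    have : -N / M < 0 := div_neg_of_neg_of_pos (by linarith) hM
    linarith
  have key : ∀ i ∈ range (L + 1), (-1 : ℝ) ^ (1 + i - 1) / (M ^ (k + (1 + i)) * N ^ (L + 3 - (1 + i)))
      = (1 / (M ^ (k + 1) * N ^ (L + 2))) * (-N / M) ^ i := by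
    intro i hi
    rw [mem_range] at hi
    have h1 : (1 : ℕ) + i - 1 = i := by omega
    have h2 : L + 3 - (1 + i) = L + 2 - i := by omega
    have h3 : N ^ (L + 2 - i) = N ^ (L + 2) / N ^ i := by
      rw [eq_div_iff (pow_ne_zero _ hN0)]
      exact pow_sub_mul_pow N (by omega)
    have h4 : M ^ (k + (1 + i)) = M ^ (k + 1) * M ^ i := by rw [← pow_add]; ring_nf
    have h5 : (-N / M) ^ i = (-1 : ℝ) ^ i * N ^ i / M ^ i := by
      rw [neg_div, neg_pow, div_pow]; ring
    rw [h1, h2, h3, h4, h5]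
    field_simp
  rw [← Finset.Ico_add_one_right_eq_Icc, Finset.sum_Ico_eq_sum_range, Nat.add_sub_cancel]
  rw [Finset.sum_congr rfl key, ← Finset.mul_sum, geom_sum_eq hx1]
  have h6 : (-N / M) ^ (L + 1) = (-1 : ℝ) ^ (L + 1) * N ^ (L + 1) / M ^ (L + 1) := by
    rw [neg_div, neg_pow, div_pow]; ring
  have h7 : -N / M - 1 = -(M + N) / M := by field_simp; ring
  rw [h6, h7, div_div_eq_mul_div, div_neg]
  field_simp
  ring


lemma partial_log2 (N : ℕ) :
    ∑ n ∈ range N, (1 / (2 * (n : ℝ) + 1) - 1 / (2 * (n : ℝ) + 2))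
      = ((harmonic (2 * N) : ℝ) - (harmonic N : ℝ)) := by
  induction N with
  | zero => simp
  | succ N ih =>
    rw [Finset.sum_range_succ, ih, show 2 * (N + 1) = (2 * N + 1) + 1 from by ring,
      harmonic_succ, harmonic_succ, harmonic_succ]
    push_cast
    have h1 : 2 * (N : ℝ) + 1 ≠ 0 := by positivity
    have h2 : 2 * (N : ℝ) + 2 ≠ 0 := by positivity
    have h3 : (N : ℝ) + 1 ≠ 0 := by positivity
    field_simp
    ring

lemma tendsto_harmonic_two : Tendsto (fun N : ℕ => (harmonic (2 * N) : ℝ) - (harmonic N : ℝ))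
    atTop (𝓝 (Real.log 2)) := by
  have h2 : Tendsto (fun N : ℕ => 2 * N) atTop atTop := by
    apply StrictMono.tendsto_atTop
    intro a b hab; dsimp only; omega
  have e1 : Tendsto (fun N : ℕ => Real.eulerMascheroniSeq (2 * N)) atTop
      (𝓝 Real.eulerMascheroniConstant) := Real.tendsto_eulerMascheroniSeq.comp h2
  have e2 := Real.tendsto_eulerMascheroniSeq
  have hq : Tendsto (fun N : ℕ => (2 * (N : ℝ) + 1) / ((N : ℝ) + 1)) atTop (𝓝 2) := by
    have he : ∀ N : ℕ, (2 * (N : ℝ) + 1) / ((N : ℝ) + 1) = 2 - 1 / ((N : ℝ) + 1) := by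
      intro N
      have h3 : (N : ℝ) + 1 ≠ 0 := by positivity
      field_simp
      ring
    simp only [he]
    have h0 := tendsto_one_div_add_atTop_nhds_zero_nat (𝕜 := ℝ)
    simpa using (tendsto_const_nhds (x := (2:ℝ)) (f := atTop)).sub h0
  have elog : Tendsto (fun N : ℕ => Real.log (2 * (N : ℝ) + 1) - Real.log ((N : ℝ) + 1))
      atTop (𝓝 (Real.log 2)) := by
    have hcont := (Real.continuousAt_log (by norm_num : (2:ℝ) ≠ 0)).tendsto.comp hq
    refine hcont.congr fun N => ?_
    rw [Function.comp_apply, Real.log_div (by positivity) (by positivity)]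
  have key := (e1.sub e2).add elog
  rw [sub_self, zero_add] at key
  refine key.congr fun N => ?_
  simp only [Real.eulerMascheroniSeq]
  push_cast
  ring


lemma hasSum_log2 :
    HasSum (fun n : ℕ => 1 / (2 * (n : ℝ) + 1) - 1 / (2 * (n : ℝ) + 2)) (Real.log 2) := by
  have hsum : Summable (fun n : ℕ => 1 / (2 * (n : ℝ) + 1) - 1 / (2 * (n : ℝ) + 2)) := by
    refine summable_sq.of_nonneg_of_le (fun n => ?_) (fun n => ?_)
    · have h : (1:ℝ) / (2 * n + 2) ≤ 1 / (2 * n + 1) := by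
        apply one_div_le_one_div_of_le (by positivity); linarith
      linarith
    · have h1 : 1 / (2 * (n:ℝ) + 1) - 1 / (2 * (n:ℝ) + 2)
          = 1 / ((2 * (n:ℝ) + 1) * (2 * (n:ℝ) + 2)) := by
        have e1 : 2 * (n:ℝ) + 1 ≠ 0 := by positivity
        have e2 : 2 * (n:ℝ) + 2 ≠ 0 := by positivity
        field_simp
        ring
      rw [h1]
      apply one_div_le_one_div_of_le (by positivity)
      nlinarith [Nat.cast_nonneg (α := ℝ) n]
  have key : Tendsto (fun N => ∑ n ∈ range N,
      (1 / (2 * (n : ℝ) + 1) - 1 / (2 * (n : ℝ) + 2))) atTop (𝓝 (Real.log 2)) := by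
    simp only [partial_log2]
    exact tendsto_harmonic_two
  have h2 : ∑' n : ℕ, (1 / (2 * (n : ℝ) + 1) - 1 / (2 * (n : ℝ) + 2)) = Real.log 2 :=
    tendsto_nhds_unique hsum.hasSum.tendsto_sum_nat key
  exact h2 ▸ hsum.hasSum

lemma tele (m : ℕ) :
    HasSum (fun n : ℕ => 1 / (2 * (n : ℝ) + 2) - 1 / (2 * (n : ℝ) + 2 * (m : ℝ) + 2))
      (∑ q ∈ range m, 1 / (2 * (q : ℝ) + 2)) := by
  set b : ℕ → ℝ := fun q => 1 / (2 * (q : ℝ) + 2) with hb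
  have hbn : ∀ n : ℕ, 1 / (2 * (n : ℝ) + 2 * (m : ℝ) + 2) = b (n + m) := by
    intro n; simp only [hb]; push_cast; ring_nf
  have hsum : Summable (fun n : ℕ => b n - b (n + m)) := by
    refine (summable_sq.mul_left (m : ℝ)).of_nonneg_of_le (fun n => ?_) (fun n => ?_)
    · simp only [hb]
      have : (1:ℝ) / (2 * ((n:ℝ) + (m:ℝ)) + 2) ≤ 1 / (2 * (n:ℝ) + 2) := by
        apply one_div_le_one_div_of_le (by positivity)
        have := Nat.cast_nonneg (α := ℝ) m
        linarith
      push_cast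
      linarith
    · simp only [hb]
      have e1 : 2 * (n:ℝ) + 2 ≠ 0 := by positivity
      have e2 : 2 * ((n:ℝ) + (m:ℝ)) + 2 ≠ 0 := by positivity
      have key : b n - b (n + m)
          = 2 * (m:ℝ) / ((2 * (n:ℝ) + 2) * (2 * ((n:ℝ) + (m:ℝ)) + 2)) := by
        simp only [hb]; push_cast; field_simp; ring
      have hm := Nat.cast_nonneg (α := ℝ) m
      have hn := Nat.cast_nonneg (α := ℝ) n
      rw [key, mul_one_div, div_le_div_iff₀ (by positivity) (by positivity)]
      nlinarith [mul_nonneg hm (sq_nonneg ((n:ℝ)+1)),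
        mul_nonneg (mul_nonneg hm hm) (by linarith : (0:ℝ) ≤ (n:ℝ)+1)]
  -- partial sums
  have hps : ∀ N : ℕ, ∑ n ∈ range N, (b n - b (n + m))
      = ∑ q ∈ range m, b q - ∑ q ∈ Ico N (N + m), b q := by
    intro N
    rw [Finset.sum_sub_distrib]
    have h1 : ∑ n ∈ range N, b (n + m) = ∑ q ∈ Ico m (m + N), b q := by
      rw [Finset.sum_Ico_eq_sum_range]
      simp only [Nat.add_sub_cancel_left]
      exact Finset.sum_congr rfl fun i _ => by rw [Nat.add_comm]
    have h2 : ∑ q ∈ range m, b q + ∑ q ∈ Ico m (m + N), b q = ∑ q ∈ range (m + N), b q :=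
      Finset.sum_range_add_sum_Ico b (Nat.le_add_right m N)
    have h3 : ∑ q ∈ range N, b q + ∑ q ∈ Ico N (N + m), b q = ∑ q ∈ range (N + m), b q :=
      Finset.sum_range_add_sum_Ico b (Nat.le_add_right N m)
    have h4 : ∑ q ∈ range (m + N), b q = ∑ q ∈ range (N + m), b q := by rw [Nat.add_comm]
    rw [h1]
    linarith
  have htail : Tendsto (fun N : ℕ => ∑ q ∈ Ico N (N + m), b q) atTop (𝓝 0) := by
    apply squeeze_zero (fun N => Finset.sum_nonneg fun q _ => by positivity)
      (g := fun N : ℕ => (m : ℝ) * (1 / (2 * (N:ℝ) + 2)))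
    · intro N
      have hcard : (Ico N (N + m)).card = m := by rw [Nat.card_Ico]; omega
      have : ∀ q ∈ Ico N (N + m), b q ≤ 1 / (2 * (N:ℝ) + 2) := by
        intro q hq
        rw [mem_Ico] at hq
        apply one_div_le_one_div_of_le (by positivity)
        have : (N:ℝ) ≤ (q:ℝ) := Nat.cast_le.mpr hq.1
        linarith
      calc ∑ q ∈ Ico N (N + m), b q ≤ ∑ q ∈ Ico N (N + m), 1 / (2 * (N:ℝ) + 2) :=
            Finset.sum_le_sum this
        _ = (m : ℝ) * (1 / (2 * (N:ℝ) + 2)) := by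
            rw [Finset.sum_const, hcard, nsmul_eq_mul]
    · have h0 : Tendsto (fun N : ℕ => 1 / (2 * (N:ℝ) + 2)) atTop (𝓝 0) := by
        have := tendsto_one_div_add_atTop_nhds_zero_nat (𝕜 := ℝ)
        have h2 : Tendsto (fun N : ℕ => (1/2 : ℝ) * (1 / ((N:ℝ) + 1))) atTop (𝓝 0) := by
          simpa using this.const_mul (1/2 : ℝ)
        refine h2.congr fun N => ?_
        field_simp
      simpa using h0.const_mul (m : ℝ)
  have key : Tendsto (fun N => ∑ n ∈ range N, (b n - b (n + m))) atTop
      (𝓝 (∑ q ∈ range m, b q)) := by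
    simp only [hps]
    simpa using (tendsto_const_nhds (x := ∑ q ∈ range m, b q) (f := atTop)).sub htail
  have h2 := tendsto_nhds_unique hsum.hasSum.tendsto_sum_nat key
  have hfe : (fun n : ℕ => 1 / (2 * (n : ℝ) + 2) - 1 / (2 * (n : ℝ) + 2 * (m : ℝ) + 2))
      = fun n => b n - b (n + m) := funext fun n => by rw [hbn n]
  rw [hfe]
  exact h2 ▸ hsum.hasSum


lemma inner_sum' (m : ℕ) :
    ∑' n : ℕ, 1 / (od n * (od m + od n))
      = 1 / od m * (Real.log 2 + ∑ q ∈ range m, 1 / (2 * (q : ℝ) + 2)) := by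
  have h := (hasSum_log2.add (tele m)).mul_right (1 / od m)
  have hfe : (fun n : ℕ =>
      (1 / (2 * (n : ℝ) + 1) - 1 / (2 * (n : ℝ) + 2)
        + (1 / (2 * (n : ℝ) + 2) - 1 / (2 * (n : ℝ) + 2 * (m : ℝ) + 2))) * (1 / od m))
      = fun n : ℕ => 1 / (od n * (od m + od n)) := by
    funext n
    have e1 : 2 * (n : ℝ) + 1 ≠ 0 := by positivity
    have e2 : 2 * (n : ℝ) + 2 ≠ 0 := by positivity
    have e3 : 2 * (n : ℝ) + 2 * (m : ℝ) + 2 ≠ 0 := by positivity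
    have e4 : od m ≠ 0 := (od_pos m).ne'
    have e5 : od n ≠ 0 := (od_pos n).ne'
    have e6 : od m + od n ≠ 0 := by have := od_pos m; have := od_pos n; positivity
    unfold od at *
    field_simp
    ring
  rw [hfe] at h
  rw [h.tsum_eq]
  ring


set_option maxHeartbeats 1000000 in
lemma reindex (v : ℕ) (hv : 3 ≤ v) :
    ∑' m : ℕ, (1 / od m ^ (v + 1)) * (∑ q ∈ range m, 1 / (2 * (q : ℝ) + 2))
      = ∑' (i : ℕ) (j : ℕ),
          (1 : ℝ) / ((2 * ((i : ℝ) + 1)) * (2 * ((i : ℝ) + (j : ℝ) + 2) - 1) ^ (v + 1)) := by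
  classical
  set F : ℕ × ℕ → ℝ := fun x => 1 / ((2 * (x.1 : ℝ) + 2) * od (x.1 + x.2 + 1) ^ (v + 1)) with hF
  set g : ℕ × ℕ → ℝ := fun q => if q.1 < q.2 then 1 / ((2 * (q.1 : ℝ) + 2) * od q.2 ^ (v + 1)) else 0 with hg
  have hFnn : ∀ x, 0 ≤ F x := fun x => by
    have := od_pos (x.1 + x.2 + 1); simp only [hF]; positivity
  -- summability of F
  have hFsum : Summable F := by
    have hb : Summable (fun x : ℕ × ℕ => (1 / ((x.1:ℝ)+1)^2) * (1 / ((x.2:ℝ)+1)^2)) :=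
      summable_sq.mul_of_nonneg summable_sq (fun n => by positivity) (fun n => by positivity)
    refine hb.of_nonneg_of_le hFnn fun x => ?_
    obtain ⟨i, j⟩ := x
    have h1 : (0:ℝ) < 2 * (i:ℝ) + 2 := by positivity
    have hod := od_pos (i + j + 1)
    have hone := one_le_od (i + j + 1)
    simp only [hF]
    rw [show (1 / (((i:ℝ)+1)^2)) * (1 / (((j:ℝ)+1)^2)) = 1 / ((((i:ℝ)+1)^2) * (((j:ℝ)+1)^2))
      from by rw [div_mul_div_comm, one_mul]]
    apply one_div_le_one_div_of_le (by positivity)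
    -- (i+1)^2 (j+1)^2 ≤ (2i+2) * od(i+j+1)^(v+1)
    have hi1 : (i:ℝ) + 1 ≤ od (i + j + 1) := by
      have := add_one_le_od (i + j + 1)
      have : ((i:ℕ):ℝ) + 1 ≤ ((i + j + 1 : ℕ):ℝ) + 1 := by push_cast; linarith [Nat.cast_nonneg (α := ℝ) j]
      linarith [add_one_le_od (i + j + 1)]
    have hj1 : (j:ℝ) + 1 ≤ od (i + j + 1) := by
      have : ((j:ℕ):ℝ) + 1 ≤ ((i + j + 1 : ℕ):ℝ) + 1 := by push_cast; linarith [Nat.cast_nonneg (α := ℝ) i]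
      linarith [add_one_le_od (i + j + 1)]
    have hpow : od (i + j + 1) ^ 3 ≤ od (i + j + 1) ^ (v + 1) :=
      pow_le_pow_right₀ hone (by omega)
    have h3 : ((i:ℝ)+1) * (((j:ℝ)+1) * ((j:ℝ)+1)) ≤ od (i + j + 1) ^ 3 := by
      rw [pow_succ, pow_two]
      have hi0 : (0:ℝ) ≤ (i:ℝ) + 1 := by positivity
      have hj0 : (0:ℝ) ≤ (j:ℝ) + 1 := by positivity
      calc ((i:ℝ)+1) * (((j:ℝ)+1) * ((j:ℝ)+1))
          ≤ od (i+j+1) * (((j:ℝ)+1) * ((j:ℝ)+1)) := by nlinarith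
        _ ≤ od (i+j+1) * (od (i+j+1) * od (i+j+1)) :=
            mul_le_mul_of_nonneg_left (mul_le_mul hj1 hj1 hj0 (le_trans hj0 hj1)) hod.le
        _ = od (i+j+1) * od (i+j+1) * od (i+j+1) := by ring
    have h4 : ((i:ℝ)+1) ≤ 2 * (i:ℝ) + 2 := by linarith [Nat.cast_nonneg (α := ℝ) i]
    calc (((i:ℝ)+1)^2) * (((j:ℝ)+1)^2)
        = ((i:ℝ)+1) * (((i:ℝ)+1) * (((j:ℝ)+1) * ((j:ℝ)+1))) := by ring
      _ ≤ (2 * (i:ℝ) + 2) * (od (i+j+1) ^ (v+1)) := by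
          apply mul_le_mul h4 (h3.trans hpow) (by positivity) (by positivity)
  -- injection
  set e : ℕ × ℕ → ℕ × ℕ := fun x => (x.1, x.1 + x.2 + 1) with he
  have hinj : Function.Injective e := by
    intro a b hab
    simp only [he, Prod.mk.injEq] at hab
    obtain ⟨h1, h2⟩ := hab
    exact Prod.ext h1 (by omega)
  have hcomp : ∀ x : ℕ × ℕ, g (e x) = F x := by
    intro x
    simp only [he, hg, hF]
    rw [if_pos (by omega)]
  have hsupp : ∀ q : ℕ × ℕ, q ∉ Set.range e → g q = 0 := by
    intro q hq
    rcases lt_or_ge q.1 q.2 with hlt | hge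
    · exact absurd ⟨(q.1, q.2 - q.1 - 1), by
        simp only [he]; exact Prod.ext rfl (by omega)⟩ hq
    · simp only [hg]; rw [if_neg (by omega)]
  have hsupp' : Function.support g ⊆ Set.range e := by
    intro q hq
    by_contra h
    exact hq (hsupp q h)
  have hgsum : Summable g := by
    rw [← hinj.summable_iff hsupp]
    exact hFsum.congr fun x => (hcomp x).symm
  have htsum_eq : ∑' x, F x = ∑' q, g q :=
    (tsum_congr fun x => (hcomp x).symm).trans (hinj.tsum_eq hsupp')
  -- RHS = ∑' x F x
  have hRHS : ∑' (i : ℕ) (j : ℕ),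
      (1 : ℝ) / ((2 * ((i : ℝ) + 1)) * (2 * ((i : ℝ) + (j : ℝ) + 2) - 1) ^ (v + 1))
      = ∑' x : ℕ × ℕ, F x := by
    rw [Summable.tsum_prod' hFsum fun i => hFsum.prod_factor i]
    refine tsum_congr fun i => tsum_congr fun j => ?_
    simp only [hF]
    unfold od
    push_cast
    ring_nf
  -- LHS: ∑' q g q with q = (i, m), outer sum over m
  have hLHS : ∑' q : ℕ × ℕ, g q
      = ∑' m : ℕ, (1 / od m ^ (v + 1)) * (∑ q ∈ range m, 1 / (2 * (q : ℝ) + 2)) := by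
    have hslice : ∀ m : ℕ, Summable fun i => g (i, m) := fun m =>
      summable_of_ne_finset_zero (s := range m)
        (fun i hi => by simp only [hg]; rw [if_neg (by simpa using hi)])
    rw [Summable.tsum_prod' hgsum fun i => hgsum.prod_factor i,
      ← Summable.tsum_comm' (f := fun i m => g (i, m)) hgsum (fun i => hgsum.prod_factor i) hslice]
    refine tsum_congr fun m => ?_
    rw [tsum_eq_sum (s := range m) (fun i hi => by simp only [hg]; rw [if_neg (by simpa using hi)])]
    rw [Finset.mul_sum]
    refine Finset.sum_congr rfl fun i hi => ?_
    rw [mem_range] at hi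
    simp only [hg]
    rw [if_pos hi, div_mul_div_comm, one_mul, mul_comm (od m ^ (v + 1))]
  rw [← hLHS, ← htsum_eq, hRHS]


lemma core (v : ℕ) (hv : 3 ≤ v) :
    4 * ∑' p : ℕ × ℕ, Df v p = 2 * Real.log 2 * Tval (v + 1) + S1 (v + 1) := by
  have hv2 : 2 ≤ v := by omega
  have hv12 : 2 ≤ v + 1 := by omega
  set Sq : ℕ → ℝ := fun m => ∑ q ∈ range m, 1 / (2 * (q : ℝ) + 2) with hSq
  have hSqnn : ∀ m, 0 ≤ Sq m := fun m => Finset.sum_nonneg fun q _ => by positivity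
  have hSqle : ∀ m : ℕ, Sq m ≤ (m : ℝ) := by
    intro m
    calc Sq m ≤ ∑ q ∈ range m, 1 := Finset.sum_le_sum fun q hq => by
          rw [div_le_one (by positivity)]
          have := Nat.cast_nonneg (α := ℝ) q
          linarith
      _ = (m : ℝ) := by simp
  -- step 1: iterated form and inner evaluation
  have h1 : ∑' p : ℕ × ℕ, Df v p = ∑' m : ℕ, (1 / od m ^ (v + 1)) * (Real.log 2 + Sq m) := by
    rw [Summable.tsum_prod' (summable_Df hv2) fun m => (summable_Df hv2).prod_factor m]
    refine tsum_congr fun m => ?_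
    have hstep : ∀ n : ℕ, Df v (m, n) = (1 / od m ^ v) * (1 / (od n * (od m + od n))) := by
      intro n
      unfold Df
      simp only
      rw [div_mul_div_comm, one_mul, mul_assoc]
    calc ∑' n : ℕ, Df v (m, n) = ∑' n : ℕ, (1 / od m ^ v) * (1 / (od n * (od m + od n))) :=
          tsum_congr hstep
      _ = (1 / od m ^ v) * ∑' n : ℕ, 1 / (od n * (od m + od n)) := tsum_mul_left
      _ = (1 / od m ^ v) * (1 / od m * (Real.log 2 + Sq m)) := by rw [inner_sum' m]
      _ = (1 / od m ^ (v + 1)) * (Real.log 2 + Sq m) := by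
          rw [pow_succ]
          have := (od_pos m).ne'
          field_simp
  -- step 2: split the sum
  have hs1 : Summable fun m : ℕ => (1 / od m ^ (v + 1)) * Real.log 2 :=
    (summable_od hv12).mul_right _
  have hs2 : Summable fun m : ℕ => (1 / od m ^ (v + 1)) * Sq m := by
    refine (summable_od hv2).of_nonneg_of_le
      (fun m => mul_nonneg (by have := od_pos m; positivity) (hSqnn m)) (fun m => ?_)
    have hom := od_pos m
    have homn : (m : ℝ) ≤ od m := by unfold od; have := Nat.cast_nonneg (α := ℝ) m; linarith
    calc (1 / od m ^ (v + 1)) * Sq m ≤ (1 / od m ^ (v + 1)) * od m := by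
          apply mul_le_mul_of_nonneg_left ((hSqle m).trans homn) (by positivity)
      _ = 1 / od m ^ v := by
          rw [pow_succ]
          field_simp
  have h2 : ∑' m : ℕ, (1 / od m ^ (v + 1)) * (Real.log 2 + Sq m)
      = (∑' m : ℕ, (1 / od m ^ (v + 1)) * Real.log 2)
        + ∑' m : ℕ, (1 / od m ^ (v + 1)) * Sq m := by
    rw [← Summable.tsum_add hs1 hs2]
    exact tsum_congr fun m => by ring
  have h3 : ∑' m : ℕ, (1 / od m ^ (v + 1)) * Real.log 2
      = (Tval (v + 1) / 2) * Real.log 2 := by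
    rw [tsum_mul_right, Tval_eq hv12]
    ring
  rw [h1, h2, h3, reindex v hv]
  unfold S1
  ring


lemma SUM1 (k L : ℕ) (hk : 2 ≤ k) :
    ∑ j ∈ Icc 1 (L + 2), (-1 : ℝ) ^ (j - 1) * Tval (L + 2 + 1 - j) * Tval (k + j)
      = 4 * ∑' p : ℕ × ℕ, Hf k (L + 2) p
        - 4 * (-1 : ℝ) ^ (L + 1) * ∑' p : ℕ × ℕ, Df (k + L + 1) p
        + (-1 : ℝ) ^ (L + 1) * (Tval 1 * Tval (k + (L + 2))) := by
  have hkL : 2 ≤ k + L + 1 := by omega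
  have hL2 : 2 ≤ L + 2 := by omega
  set U : ℕ → ℕ × ℕ → ℝ := fun j p =>
    (4 * (-1 : ℝ) ^ (j - 1)) * (1 / (od p.1 ^ (k + j) * od p.2 ^ (L + 3 - j))) with hU
  have hUsum : ∀ j ∈ Icc 1 (L + 1), Summable (U j) := by
    intro j hj
    rw [mem_Icc] at hj
    exact (summable_pair (by omega) (by omega : 2 ≤ L + 3 - j)).mul_left _
  have ha : ∀ j ∈ Icc 1 (L + 1),
      (-1 : ℝ) ^ (j - 1) * Tval (L + 2 + 1 - j) * Tval (k + j) = ∑' p : ℕ × ℕ, U j p := by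
    intro j hj
    rw [mem_Icc] at hj
    have h2a : 2 ≤ k + j := by omega
    have h2b : 2 ≤ L + 3 - j := by omega
    have hrw : L + 2 + 1 - j = L + 3 - j := by omega
    have htt : ∑' p : ℕ × ℕ, U j p
        = (4 * (-1 : ℝ) ^ (j - 1)) * ∑' (m : ℕ) (n : ℕ),
            1 / (od m ^ (k + j) * od n ^ (L + 3 - j)) := by
      rw [tsum_mul_left, tsum_prod_eq (summable_pair h2a h2b)]
    rw [hrw, htt, mul_assoc, mul_comm (Tval (L + 3 - j)) (Tval (k + j)), Tmul h2a h2b]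
    ring
  rw [Finset.sum_Icc_succ_top (by omega : 1 ≤ L + 1 + 1), Finset.sum_congr rfl ha]
  have hint : ∑ j ∈ Icc 1 (L + 1), ∑' p : ℕ × ℕ, U j p
      = ∑' p : ℕ × ℕ, ∑ j ∈ Icc 1 (L + 1), U j p :=
    (hasSum_sum fun j hj => (hUsum j hj).hasSum).tsum_eq.symm
  have hgeo : ∀ p : ℕ × ℕ, ∑ j ∈ Icc 1 (L + 1), U j p
      = 4 * Hf k (L + 2) p - 4 * (-1 : ℝ) ^ (L + 1) * Df (k + L + 1) p := by
    intro p
    have hg := geom_aux (od p.1) (od p.2) (od_pos p.1) (od_pos p.2) k L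
    calc ∑ j ∈ Icc 1 (L + 1), U j p
        = 4 * ∑ j ∈ Icc 1 (L + 1),
            (-1 : ℝ) ^ (j - 1) / (od p.1 ^ (k + j) * od p.2 ^ (L + 3 - j)) := by
          rw [Finset.mul_sum]
          exact Finset.sum_congr rfl fun j _ => by rw [hU]; ring
      _ = 4 * Hf k (L + 2) p - 4 * (-1 : ℝ) ^ (L + 1) * Df (k + L + 1) p := by
          rw [hg]
          unfold Hf Df
          ring
  have hsplit : ∑' p : ℕ × ℕ, ∑ j ∈ Icc 1 (L + 1), U j p
      = 4 * ∑' p : ℕ × ℕ, Hf k (L + 2) p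
        - 4 * (-1 : ℝ) ^ (L + 1) * ∑' p : ℕ × ℕ, Df (k + L + 1) p := by
    rw [tsum_congr hgeo,
      Summable.tsum_sub ((summable_Hf hk hL2).mul_left 4) ((summable_Df hkL).mul_left _),
      tsum_mul_left, tsum_mul_left]
  rw [hint, hsplit]
  have h1 : L + 1 + 1 - 1 = L + 1 := by omega
  have h2 : L + 2 + 1 - (L + 1 + 1) = 1 := by omega
  have h3 : k + (L + 1 + 1) = k + (L + 2) := by omega
  rw [h1, h2, h3]
  ring


theorem stmt11 (k l : ℕ) (hk : 2 ≤ k) (hl : 2 ≤ l) :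
    ((-1 : ℝ) ^ l - (-1 : ℝ) ^ k) * S1 (k + l)
      = (∑ j ∈ Finset.Icc 1 l, (-1 : ℝ) ^ (j - 1) * Tval (l + 1 - j) * Tval (k + j))
        + ∑ j ∈ Finset.Icc 1 k, (-1 : ℝ) ^ j * Tval (k + 1 - j) * Tval (l + j) := by
  obtain ⟨K, rfl⟩ : ∃ K, k = K + 2 := ⟨k - 2, by omega⟩
  obtain ⟨L, rfl⟩ : ∃ L, l = L + 2 := ⟨l - 2, by omega⟩
  have hneg : ∀ j ∈ Icc 1 (K + 2), (-1 : ℝ) ^ j * Tval (K + 2 + 1 - j) * Tval (L + 2 + j)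
      = -((-1 : ℝ) ^ (j - 1) * Tval (K + 2 + 1 - j) * Tval (L + 2 + j)) := by
    intro j hj
    rw [mem_Icc] at hj
    have h2 : j - 1 + 1 = j := by omega
    have h1 : (-1 : ℝ) ^ (j - 1) * (-1) = (-1 : ℝ) ^ j := by rw [← pow_succ, h2]
    rw [← h1]
    ring
  rw [Finset.sum_congr rfl hneg, Finset.sum_neg_distrib, SUM1 (K + 2) L hk,
    SUM1 (L + 2) K hl, Hswap (L + 2) (K + 2)]
  rw [show L + 2 + K + 1 = K + L + 3 from by omega,
    show K + 2 + L + 1 = K + L + 3 from by omega,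
    show L + 2 + (K + 2) = K + L + 3 + 1 from by omega,
    show K + 2 + (L + 2) = K + L + 3 + 1 from by omega]
  have hcore := core (K + L + 3) (by omega)
  have hp1 : ∀ n : ℕ, (-1 : ℝ) ^ (n + 2) = (-1 : ℝ) ^ n := by
    intro n; rw [pow_add]; norm_num
  have hp2 : ∀ n : ℕ, (-1 : ℝ) ^ (n + 1) = -(-1 : ℝ) ^ n := by
    intro n; rw [pow_succ]; ring
  rw [hp1 K, hp1 L, hp2 K, hp2 L, Tval_one]
  linear_combination ((-1 : ℝ) ^ K - (-1 : ℝ) ^ L) * hcore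
end

section
/- Depth-one duality at level one: for integers k, l, p with k, l ≥ 2 and p ≥ 1, ∫₀¹ Li_{k+p-1}(x) · Li_l(x) / x dx + (-1)^p ∫₀¹ Li_k(x) · Li_{l+p-1}(x) / x dx = ∑_{j=1}^{p-1} (-1)^{j-1} ζ(k+p-j) ζ(l+j). -/
/-- The classical polylogarithm `Li_m(x) = ∑_{n≥1} x^n / n^m`. -/
noncomputable def Li (m : ℕ) (x : ℝ) : ℝ := ∑' n : ℕ, x ^ (n + 1) / ((n : ℝ) + 1) ^ m

/-- Riemann zeta value `ζ(m) = ∑_{n≥1} 1/n^m`. -/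
noncomputable def zetaVal (m : ℕ) : ℝ := ∑' n : ℕ, (1 : ℝ) / ((n : ℝ) + 1) ^ m

noncomputable def gLi (m : ℕ) (x : ℝ) : ℝ := ∑' n : ℕ, x ^ n / ((n : ℝ) + 1) ^ m

lemma summable_inv_pow {m : ℕ} (hm : 2 ≤ m) :
    Summable (fun n : ℕ => (1:ℝ) / ((n:ℝ)+1) ^ m) := by
  have h : Summable (fun n : ℕ => (1:ℝ) / (n:ℝ) ^ m) :=
    Real.summable_one_div_nat_pow.mpr (by omega)
  have := (summable_nat_add_iff 1).mpr h
  refine this.congr fun n => ?_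
  push_cast
  ring_nf

lemma Li_eq_mul (m : ℕ) (x : ℝ) : Li m x = x * gLi m x := by
  rw [Li, gLi, ← tsum_mul_left]
  congr 1; ext n; rw [pow_succ]; ring

lemma Li_zero (m : ℕ) : Li m 0 = 0 := by rw [Li_eq_mul]; ring

lemma Li_one (m : ℕ) : Li m 1 = zetaVal m := by simp [Li, zetaVal]

lemma gLi_continuousOn {m : ℕ} (hm : 2 ≤ m) :
    ContinuousOn (gLi m) (Set.Icc (-1:ℝ) 1) := by
  apply continuousOn_tsum (u := fun n : ℕ => (1:ℝ) / ((n:ℝ)+1) ^ m)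
  · intro i; fun_prop
  · exact summable_inv_pow hm
  · intro n x hx
    have h1 : |x| ≤ 1 := abs_le.mpr ⟨hx.1, hx.2⟩
    have h2 : (0:ℝ) < ((n:ℝ)+1) ^ m := by positivity
    rw [Real.norm_eq_abs, abs_div, abs_pow, abs_of_pos h2, div_le_div_iff₀ h2 h2]
    have : |x| ^ n ≤ 1 := pow_le_one₀ (abs_nonneg x) h1
    nlinarith

lemma Li_continuousOn {m : ℕ} (hm : 2 ≤ m) :
    ContinuousOn (Li m) (Set.Icc (-1:ℝ) 1) := by
  have : ContinuousOn (fun x : ℝ => x * gLi m x) (Set.Icc (-1:ℝ) 1) :=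
    continuousOn_id.mul (gLi_continuousOn hm)
  exact this.congr fun x _ => Li_eq_mul m x

lemma Li_hasDerivAt {m : ℕ} (hm : 2 ≤ m) {x : ℝ} (hx : x ∈ Set.Ioo (-1:ℝ) 1) :
    HasDerivAt (Li (m+1)) (gLi m x) x := by
  have key := hasDerivAt_tsum_of_isPreconnected
    (u := fun n : ℕ => (1:ℝ) / ((n:ℝ)+1) ^ m)
    (g := fun n : ℕ => fun y : ℝ => y ^ (n+1) / ((n:ℝ)+1) ^ (m+1))
    (g' := fun n : ℕ => fun y : ℝ => y ^ n / ((n:ℝ)+1) ^ m)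
    (summable_inv_pow hm) isOpen_Ioo (convex_Ioo (-1:ℝ) 1).isPreconnected
    (fun n y _ => ?_) (fun n y hy => ?_) (y₀ := 0) (by constructor <;> norm_num)
    ?_ hx
  · exact key
  · have h := (hasDerivAt_pow (n+1) y).div_const (((n:ℝ)+1) ^ (m+1))
    convert h using 1
    have hne : ((n:ℝ)+1) ≠ 0 := by positivity
    case e'_4 => rfl
    rw [Nat.add_sub_cancel]; push_cast
    field_simp [pow_succ]
    ring
  · have h1 : |y| ≤ 1 := le_of_lt (abs_lt.mpr ⟨hy.1, hy.2⟩)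
    have h2 : (0:ℝ) < ((n:ℝ)+1) ^ m := by positivity
    rw [Real.norm_eq_abs, abs_div, abs_pow, abs_of_pos h2, div_le_div_iff₀ h2 h2]
    have : |y| ^ n ≤ 1 := pow_le_one₀ (abs_nonneg y) h1
    nlinarith
  · apply summable_zero.congr
    intro n; simp

lemma integrand_eq (a b : ℕ) (x : ℝ) :
    Li a x * Li b x / x = gLi a x * Li b x := by
  rcases eq_or_ne x 0 with rfl | hx
  · simp [Li_zero]
  · rw [Li_eq_mul a x]; field_simp

lemma integrand_eq' (a b : ℕ) (x : ℝ) :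
    Li a x * Li b x / x = Li a x * gLi b x := by
  rcases eq_or_ne x 0 with rfl | hx
  · simp [Li_zero]
  · rw [Li_eq_mul b x]; field_simp

lemma key_ibp (a b : ℕ) (ha : 2 ≤ a) (hb : 2 ≤ b) :
    (∫ x in (0:ℝ)..1, Li a x * Li (b+1) x / x)
      + (∫ x in (0:ℝ)..1, Li (a+1) x * Li b x / x)
    = zetaVal (a+1) * zetaVal (b+1) := by
  have hsub : Set.Icc (0:ℝ) 1 ⊆ Set.Icc (-1:ℝ) 1 :=
    Set.Icc_subset_Icc (by norm_num) le_rfl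
  have hsub' : Set.uIcc (0:ℝ) 1 ⊆ Set.Icc (-1:ℝ) 1 := by
    rw [Set.uIcc_of_le (by norm_num : (0:ℝ) ≤ 1)]; exact hsub
  have cga : ContinuousOn (gLi a) (Set.Icc (0:ℝ) 1) := (gLi_continuousOn ha).mono hsub
  have cgb : ContinuousOn (gLi b) (Set.Icc (0:ℝ) 1) := (gLi_continuousOn hb).mono hsub
  have cLa : ContinuousOn (Li (a+1)) (Set.Icc (0:ℝ) 1) :=
    (Li_continuousOn (by omega)).mono hsub
  have cLb : ContinuousOn (Li (b+1)) (Set.Icc (0:ℝ) 1) :=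
    (Li_continuousOn (by omega)).mono hsub
  set F' : ℝ → ℝ := fun x => gLi a x * Li (b+1) x + Li (a+1) x * gLi b x with hF'
  have hderiv : ∀ x ∈ Set.Ioo (0:ℝ) 1,
      HasDerivAt (fun y => Li (a+1) y * Li (b+1) y) (F' x) x := by
    intro x hx
    have hx' : x ∈ Set.Ioo (-1:ℝ) 1 := ⟨by linarith [hx.1], hx.2⟩
    exact (Li_hasDerivAt ha hx').mul (Li_hasDerivAt hb hx')
  have huIcc : Set.uIcc (0:ℝ) 1 = Set.Icc (0:ℝ) 1 := Set.uIcc_of_le (by norm_num)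
  have int1 : IntervalIntegrable (fun x => gLi a x * Li (b+1) x) MeasureTheory.volume 0 1 :=
    (huIcc ▸ (cga.mul cLb)).intervalIntegrable
  have int2 : IntervalIntegrable (fun x => Li (a+1) x * gLi b x) MeasureTheory.volume 0 1 :=
    (huIcc ▸ (cLa.mul cgb)).intervalIntegrable
  have ftc := intervalIntegral.integral_eq_sub_of_hasDeriv_right_of_le (by norm_num)
    (cLa.mul cLb) (fun x hx => (hderiv x hx).hasDerivWithinAt) (int1.add int2)
  have e1 : (∫ x in (0:ℝ)..1, Li a x * Li (b+1) x / x)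
      = ∫ x in (0:ℝ)..1, gLi a x * Li (b+1) x :=
    intervalIntegral.integral_congr (fun x _ => integrand_eq a (b+1) x)
  have e2 : (∫ x in (0:ℝ)..1, Li (a+1) x * Li b x / x)
      = ∫ x in (0:ℝ)..1, Li (a+1) x * gLi b x :=
    intervalIntegral.integral_congr (fun x _ => integrand_eq' (a+1) b x)
  rw [intervalIntegral.integral_add int1 int2] at ftc
  rw [e1, e2]
  rw [ftc, Pi.mul_apply, Pi.mul_apply, Li_one, Li_one, Li_zero]
  ring

lemma aux_ind (a : ℕ) (ha : 2 ≤ a) :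
    ∀ q : ℕ, ∀ l : ℕ, 2 ≤ l →
    (∫ x in (0:ℝ)..1, Li (a + q) x * Li l x / x)
      + (-1 : ℝ) ^ (q + 1) * ∫ x in (0:ℝ)..1, Li a x * Li (l + q) x / x
    = ∑ j ∈ Finset.Icc 1 q, (-1 : ℝ) ^ (j - 1) * zetaVal (a + q + 1 - j) * zetaVal (l + j) := by
  intro q
  induction q with
  | zero => intro l hl; simp
  | succ q ih =>
    intro l hl
    simp only [show a + (q + 1) = a + q + 1 from by omega,
      show l + (q + 1) = l + q + 1 from by omega]
    have hkey := key_ibp (a + q) l (by omega) hl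
    have hih := ih (l + 1) (by omega)
    rw [show l + 1 + q = l + q + 1 from by omega] at hih
    have hsum : (∑ j ∈ Finset.Icc 1 (q+1),
          (-1 : ℝ) ^ (j - 1) * zetaVal (a + q + 1 + 1 - j) * zetaVal (l + j))
        = zetaVal (a + q + 1) * zetaVal (l + 1)
          - ∑ j ∈ Finset.Icc 1 q,
              (-1 : ℝ) ^ (j - 1) * zetaVal (a + q + 1 - j) * zetaVal (l + 1 + j) := by
      rw [← Finset.Ico_add_one_right_eq_Icc, Finset.sum_Ico_eq_sum_range,
        ← Finset.Ico_add_one_right_eq_Icc, Finset.sum_Ico_eq_sum_range]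
      rw [show q+1+1-1 = q+1 from by omega, show q+1-1 = q from by omega,
        Finset.sum_range_succ']
      have hterm : ∀ i ∈ Finset.range q,
          (-1:ℝ)^(1+(i+1)-1) * zetaVal (a+q+1+1-(1+(i+1))) * zetaVal (l+(1+(i+1)))
          = -((-1:ℝ)^(1+i-1) * zetaVal (a+q+1-(1+i)) * zetaVal (l+1+(1+i))) := by
        intro i _
        rw [show 1+(i+1)-1 = i+1 from by omega,
          show a+q+1+1-(1+(i+1)) = a+q+1-(1+i) from by omega,
          show l+(1+(i+1)) = l+1+(1+i) from by omega,
          show 1+i-1 = i from by omega, pow_succ]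
        ring
      rw [Finset.sum_congr rfl hterm, Finset.sum_neg_distrib,
        show 1+0-1 = 0 from rfl, show a+q+1+1-(1+0) = a+q+1 from by omega,
        show l+(1+0) = l+1 from by omega, pow_zero]
      ring
    rw [hsum, show (-1:ℝ)^(q+1+1) = -(-1:ℝ)^(q+1) from by rw [pow_succ]; ring]
    linear_combination hkey - hih

theorem stmt17 (k l p : ℕ) (hk : 2 ≤ k) (hl : 2 ≤ l) (hp : 1 ≤ p) :
    (∫ x in (0:ℝ)..1, Li (k + p - 1) x * Li l x / x)
      + (-1 : ℝ) ^ p * ∫ x in (0:ℝ)..1, Li k x * Li (l + p - 1) x / x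
    = ∑ j ∈ Finset.Icc 1 (p - 1), (-1 : ℝ) ^ (j - 1) * zetaVal (k + p - j) * zetaVal (l + j) := by
  obtain ⟨q, rfl⟩ : ∃ q, p = q + 1 := ⟨p - 1, by omega⟩
  rw [show k + (q+1) - 1 = k + q from by omega,
    show l + (q+1) - 1 = l + q from by omega,
    show q + 1 - 1 = q from by omega]
  rw [aux_ind k hk q l hl]
  refine Finset.sum_congr rfl fun j hj => ?_
  rw [show k + (q+1) - j = k + q + 1 - j from by omega]
end
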